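/- Let ℒ := ΘL + LᵀΘ for a strongly connected weighted directed graph. Then ker(ℒ) = span{𝟏_N}; i.e., ℒx = 0 if and only if x is a scalar multiple of the all-ones vector. -/
import Mathlib


open Matrix

def IsLaplacianOfStronglyConnectedDigraph {N : ℕ} (L : Matrix (Fin N) (Fin N) ℝ) : Prop :=
  ∃ Adj : Matrix (Fin N) (Fin N) ℝ,
    (∀ i j, 0 ≤ Adj i j) ∧ (∀ i, Adj i i = 0) ∧
    (∀ i j : Fin N, i ≠ j → Relation.TransGen (fun a b => Adj b a ≠ 0) i j) ∧
    L = Matrix.diagonal (fun i => ∑ j, Adj i j) - Adj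

/-- `ker(ℒ) = span{𝟏_N}`: `ℒ x = 0` iff `x` is a scalar multiple of the all-ones vector. -/
theorem stmt_2 {N : ℕ} (L : Matrix (Fin N) (Fin N) ℝ)
    (hL : IsLaplacianOfStronglyConnectedDigraph L)
    (θ : Fin N → ℝ) (hθpos : ∀ i, 0 < θ i) (hθL : Matrix.vecMul θ L = 0)
    (hθsum : ∑ i, θ i = (N : ℝ)) :
    ∀ x : Fin N → ℝ,
      (Matrix.diagonal θ * L + Lᵀ * Matrix.diagonal θ).mulVec x = 0 ↔
        ∃ c : ℝ, x = fun _ => c := by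
  obtain ⟨A, hA0, hAdiag, hconn, hLdef⟩ := hL
  have hLentry : ∀ i j, L i j = (if i = j then ∑ k, A i k else 0) - A i j := by
    intro i j
    rw [hLdef]
    simp [Matrix.sub_apply, Matrix.diagonal_apply]
  -- column balance: ∀ j, ∑ i, θ i * A i j = θ j * ∑ k, A j k
  have hcol : ∀ j, ∑ i, θ i * L i j = 0 := by
    intro j
    have h := congrFun hθL j
    simpa [Matrix.vecMul, dotProduct] using h
  have hbal : ∀ j, ∑ i, θ i * A i j = θ j * ∑ k, A j k := by
    intro j
    have h := hcol j
    have : ∑ i, θ i * L i j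
        = (∑ i, θ i * (if i = j then ∑ k, A i k else 0)) - ∑ i, θ i * A i j := by
      rw [← Finset.sum_sub_distrib]
      exact Finset.sum_congr rfl fun i _ => by rw [hLentry]; ring
    rw [this] at h
    have hd : (∑ i, θ i * (if i = j then ∑ k, A i k else 0)) = θ j * ∑ k, A j k := by
      rw [Finset.sum_eq_single j]
      · simp
      · intro b _ hb; simp [hb]
      · simp
    rw [hd] at h
    linarith
  have hrow : ∀ i, ∑ j, L i j = 0 := by
    intro i
    have : ∑ j, L i j = (∑ j, (if i = j then ∑ k, A i k else 0)) - ∑ j, A i j := by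
      rw [← Finset.sum_sub_distrib]
      exact Finset.sum_congr rfl fun j _ => hLentry i j
    rw [this, Finset.sum_ite_eq (Finset.univ) i (fun _ => ∑ k, A i k)]
    simp
  intro x
  constructor
  · intro hx
    -- quadratic form is zero
    have hdot : x ⬝ᵥ ((Matrix.diagonal θ * L + Lᵀ * Matrix.diagonal θ).mulVec x) = 0 := by
      rw [hx]; simp
    have e1 : x ⬝ᵥ ((Matrix.diagonal θ * L).mulVec x) = ∑ i, θ i * x i * (L.mulVec x i) := by
      rw [← Matrix.mulVec_mulVec]
      simp [dotProduct, Matrix.mulVec_diagonal]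
      exact Finset.sum_congr rfl fun i _ => by ring
    have e2 : x ⬝ᵥ ((Lᵀ * Matrix.diagonal θ).mulVec x) = ∑ i, θ i * x i * (L.mulVec x i) := by
      rw [← Matrix.mulVec_mulVec, Matrix.dotProduct_mulVec, Matrix.vecMul_transpose]
      simp [dotProduct, Matrix.mulVec_diagonal]
      exact Finset.sum_congr rfl fun i _ => by ring
    rw [Matrix.add_mulVec, dotProduct_add, e1, e2] at hdot
    have hsum0 : ∑ i, θ i * x i * (L.mulVec x i) = 0 := by linarith
    have hmv : ∀ i, L.mulVec x i = (∑ k, A i k) * x i - ∑ j, A i j * x j := by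
      intro i
      unfold Matrix.mulVec dotProduct
      have : ∑ j, L i j * x j
          = (∑ j, (if i = j then ∑ k, A i k else 0) * x j) - ∑ j, A i j * x j := by
        rw [← Finset.sum_sub_distrib]
        exact Finset.sum_congr rfl fun j _ => by rw [hLentry]; ring
      rw [this]
      simp only [ite_mul, zero_mul, Finset.sum_ite_eq, Finset.mem_univ, if_true]
    -- key identity
    have hkey : ∑ i, ∑ j, θ i * A i j * (x i - x j) ^ 2
        = 2 * ∑ i, θ i * x i * (L.mulVec x i) := by
      have expand : ∑ i, ∑ j, θ i * A i j * (x i - x j) ^ 2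
          = (∑ i, ∑ j, θ i * A i j * x i ^ 2)
            - 2 * (∑ i, ∑ j, θ i * A i j * (x i * x j))
            + ∑ i, ∑ j, θ i * A i j * x j ^ 2 := by
        simp only [Finset.mul_sum]
        rw [← Finset.sum_sub_distrib, ← Finset.sum_add_distrib]
        apply Finset.sum_congr rfl
        intro i _
        rw [← Finset.sum_sub_distrib, ← Finset.sum_add_distrib]
        exact Finset.sum_congr rfl fun j _ => by ring
      have t1 : ∑ i, ∑ j, θ i * A i j * x i ^ 2 = ∑ i, θ i * (∑ k, A i k) * x i ^ 2 := by
        apply Finset.sum_congr rfl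
        intro i _
        rw [Finset.mul_sum, Finset.sum_mul]
      have t3 : ∑ i, ∑ j, θ i * A i j * x j ^ 2 = ∑ i, θ i * (∑ k, A i k) * x i ^ 2 := by
        rw [Finset.sum_comm]
        apply Finset.sum_congr rfl
        intro j _
        have : ∑ i, θ i * A i j * x j ^ 2 = (∑ i, θ i * A i j) * x j ^ 2 := by
          rw [Finset.sum_mul]
        rw [this, hbal j]
      have rhs : ∑ i, θ i * x i * (L.mulVec x i)
          = (∑ i, θ i * (∑ k, A i k) * x i ^ 2) - ∑ i, ∑ j, θ i * A i j * (x i * x j) := by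
        rw [← Finset.sum_sub_distrib]
        apply Finset.sum_congr rfl
        intro i _
        rw [hmv i, mul_sub]
        congr 1
        · ring
        · rw [Finset.mul_sum]
          exact Finset.sum_congr rfl fun j _ => by ring
      rw [expand, t1, t3, rhs]
      ring
    have hq0 : ∑ i, ∑ j, θ i * A i j * (x i - x j) ^ 2 = 0 := by
      rw [hkey, hsum0]; ring
    have hterm : ∀ i j, θ i * A i j * (x i - x j) ^ 2 = 0 := by
      have hnn : ∀ i ∈ Finset.univ, (0:ℝ) ≤ ∑ j, θ i * A i j * (x i - x j) ^ 2 := by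
        intro i _
        apply Finset.sum_nonneg
        intro j _
        exact mul_nonneg (mul_nonneg (hθpos i).le (hA0 i j)) (sq_nonneg _)
      have h1 := (Finset.sum_eq_zero_iff_of_nonneg hnn).mp hq0
      intro i j
      have h2 := h1 i (Finset.mem_univ i)
      have hnn2 : ∀ j ∈ Finset.univ, (0:ℝ) ≤ θ i * A i j * (x i - x j) ^ 2 := fun j _ =>
        mul_nonneg (mul_nonneg (hθpos i).le (hA0 i j)) (sq_nonneg _)
      exact (Finset.sum_eq_zero_iff_of_nonneg hnn2).mp h2 j (Finset.mem_univ j)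
    have hEdge : ∀ i j, A i j ≠ 0 → x i = x j := by
      intro i j hAij
      have h := hterm i j
      have hApos : 0 < A i j := lt_of_le_of_ne (hA0 i j) (Ne.symm hAij)
      have : (x i - x j) ^ 2 = 0 := by
        by_contra hne
        have := mul_ne_zero (mul_ne_zero (hθpos i).ne' hApos.ne') hne
        exact this h
      have := pow_eq_zero_iff (n := 2) (by norm_num) |>.mp this
      linarith [sub_eq_zero.mp this]
    have hconst : ∀ i j : Fin N, x i = x j := by
      have step : ∀ a b : Fin N, Relation.TransGen (fun a b => A b a ≠ 0) a b → x a = x b := by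
        intro a b h
        induction h with
        | single h => exact (hEdge _ _ h).symm
        | tail _ h2 ih => exact ih.trans (hEdge _ _ h2).symm
      intro i j
      by_cases h : i = j
      · rw [h]
      · exact step i j (hconn i j h)
    rcases Nat.eq_zero_or_pos N with hN | hN
    · subst hN
      exact ⟨0, funext fun i => i.elim0⟩
    · exact ⟨x ⟨0, hN⟩, funext fun i => hconst i ⟨0, hN⟩⟩
  · rintro ⟨c, rfl⟩
    funext i
    rw [Matrix.add_mulVec]
    have h1 : (Matrix.diagonal θ * L).mulVec (fun _ => c) i = 0 := by
      rw [← Matrix.mulVec_mulVec]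
      have : L.mulVec (fun _ => c) = 0 := by
        funext k
        unfold Matrix.mulVec dotProduct
        have : ∑ j, L k j * c = (∑ j, L k j) * c := by rw [Finset.sum_mul]
        simp only [this, hrow k, zero_mul]
        rfl
      rw [this]
      simp
    have h2 : (Lᵀ * Matrix.diagonal θ).mulVec (fun _ => c) i = 0 := by
      rw [← Matrix.mulVec_mulVec]
      have hΘ : (Matrix.diagonal θ).mulVec (fun _ => c) = fun k => θ k * c := by
        funext k
        simp [Matrix.mulVec_diagonal]
      rw [hΘ]
      unfold Matrix.mulVec dotProduct
      have : ∑ j, Lᵀ i j * (θ j * c) = (∑ j, θ j * L j i) * c := by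
        rw [Finset.sum_mul]
        exact Finset.sum_congr rfl fun j _ => by rw [Matrix.transpose_apply]; ring
      simp only [this, hcol i, zero_mul]
    simp only [Pi.add_apply, h1, h2, add_zero]
    rfl
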